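/- For 0 < α < 1, the function f(x) = (x−2)(x² + 1)^α + 2(x² + 4)^α − 2((x−1)² + 4)^α − (x−3)((x−1)² + 1)^α is strictly increasing on [3, ∞). -/

import Mathlib

open Real

noncomputable def Fa (α t : ℝ) : ℝ := (t - 2) * (t ^ 2 + 1) ^ α + 2 * (t ^ 2 + 4) ^ α

noncomputable def Ga (α t : ℝ) : ℝ :=
  (t ^ 2 + 1) ^ α + (t - 2) * (2 * t * α * (t ^ 2 + 1) ^ (α - 1))
    + 2 * (2 * t * α * (t ^ 2 + 4) ^ (α - 1))

noncomputable def Ha (α t : ℝ) : ℝ :=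
  2 * α * ((t ^ 2 + 1) ^ (α - 2) * ((2 * α + 1) * t ^ 3 + (2 - 4 * α) * t ^ 2 + 3 * t - 2))
    + 4 * α * ((t ^ 2 + 4) ^ (α - 2) * ((2 * α - 1) * t ^ 2 + 4))

lemma hu1 (t : ℝ) : (0:ℝ) < t ^ 2 + 1 := by positivity
lemma hu4 (t : ℝ) : (0:ℝ) < t ^ 2 + 4 := by positivity

lemma hbase (t : ℝ) : HasDerivAt (fun t : ℝ => t ^ 2 + 1) (2 * t) t := by
  simpa using ((hasDerivAt_pow 2 t).add_const 1)

lemma hbase4 (t : ℝ) : HasDerivAt (fun t : ℝ => t ^ 2 + 4) (2 * t) t := by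
  simpa using ((hasDerivAt_pow 2 t).add_const 4)

lemma hp1 (α t : ℝ) :
    HasDerivAt (fun t : ℝ => (t ^ 2 + 1) ^ α) (2 * t * α * (t ^ 2 + 1) ^ (α - 1)) t :=
  (hbase t).rpow_const (Or.inl (hu1 t).ne')

lemma hp4 (α t : ℝ) :
    HasDerivAt (fun t : ℝ => (t ^ 2 + 4) ^ α) (2 * t * α * (t ^ 2 + 4) ^ (α - 1)) t :=
  (hbase4 t).rpow_const (Or.inl (hu4 t).ne')

lemma hFderiv (α t : ℝ) : HasDerivAt (Fa α) (Ga α t) t := by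
  have h1 : HasDerivAt (fun t : ℝ => (t - 2) * (t ^ 2 + 1) ^ α)
      (1 * (t ^ 2 + 1) ^ α + (t - 2) * (2 * t * α * (t ^ 2 + 1) ^ (α - 1))) t :=
    ((hasDerivAt_id t).sub_const 2).mul (hp1 α t)
  have h2 := (hp4 α t).const_mul 2
  have := h1.add h2
  unfold Fa Ga
  refine this.congr_deriv ?_
  ring

lemma hGderiv (α t : ℝ) : HasDerivAt (Ga α) (Ha α t) t := by
  have hq1 : HasDerivAt (fun t : ℝ => (t ^ 2 + 1) ^ (α - 1))
      (2 * t * (α - 1) * (t ^ 2 + 1) ^ (α - 1 - 1)) t :=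
    (hbase t).rpow_const (Or.inl (hu1 t).ne')
  have hq4 : HasDerivAt (fun t : ℝ => (t ^ 2 + 4) ^ (α - 1))
      (2 * t * (α - 1) * (t ^ 2 + 4) ^ (α - 1 - 1)) t :=
    (hbase4 t).rpow_const (Or.inl (hu4 t).ne')
  -- derivative of t ↦ 2*t*α*(t^2+1)^(α-1)
  have hm1 : HasDerivAt (fun t : ℝ => 2 * t * α * (t ^ 2 + 1) ^ (α - 1))
      ((2 * α) * (t ^ 2 + 1) ^ (α - 1)
        + 2 * t * α * (2 * t * (α - 1) * (t ^ 2 + 1) ^ (α - 1 - 1))) t := by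
    have h := (((hasDerivAt_id t).const_mul 2).mul_const α).mul hq1
    refine h.congr_deriv ?_
    simp only [id_eq]
    ring
  have hm4 : HasDerivAt (fun t : ℝ => 2 * t * α * (t ^ 2 + 4) ^ (α - 1))
      ((2 * α) * (t ^ 2 + 4) ^ (α - 1)
        + 2 * t * α * (2 * t * (α - 1) * (t ^ 2 + 4) ^ (α - 1 - 1))) t := by
    have h := (((hasDerivAt_id t).const_mul 2).mul_const α).mul hq4
    refine h.congr_deriv ?_
    simp only [id_eq]
    ring
  have h2 : HasDerivAt (fun t : ℝ => (t - 2) * (2 * t * α * (t ^ 2 + 1) ^ (α - 1)))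
      (1 * (2 * t * α * (t ^ 2 + 1) ^ (α - 1))
        + (t - 2) * ((2 * α) * (t ^ 2 + 1) ^ (α - 1)
          + 2 * t * α * (2 * t * (α - 1) * (t ^ 2 + 1) ^ (α - 1 - 1)))) t :=
    ((hasDerivAt_id t).sub_const 2).mul hm1
  have h3 := hm4.const_mul 2
  have hsum := ((hp1 α t).add h2).add h3
  unfold Ga Ha
  refine hsum.congr_deriv ?_
  have e1 : (t ^ 2 + 1 : ℝ) ^ (α - 1) = (t ^ 2 + 1) ^ (α - 2) * (t ^ 2 + 1) := by
    rw [show α - 1 = (α - 2) + 1 by ring, Real.rpow_add_one (hu1 t).ne']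
  have e4 : (t ^ 2 + 4 : ℝ) ^ (α - 1) = (t ^ 2 + 4) ^ (α - 2) * (t ^ 2 + 4) := by
    rw [show α - 1 = (α - 2) + 1 by ring, Real.rpow_add_one (hu4 t).ne']
  have e1' : (t ^ 2 + 1 : ℝ) ^ (α - 1 - 1) = (t ^ 2 + 1) ^ (α - 2) := by
    rw [show α - 1 - 1 = α - 2 by ring]
  have e4' : (t ^ 2 + 4 : ℝ) ^ (α - 1 - 1) = (t ^ 2 + 4) ^ (α - 2) := by
    rw [show α - 1 - 1 = α - 2 by ring]
  rw [e1, e4, e1', e4']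
  ring

lemma Ha_pos {α : ℝ} (hα0 : 0 < α) (hα1 : α < 1) {t : ℝ} (ht : 2 ≤ t) : 0 < Ha α t := by
  set U := (t ^ 2 + 1 : ℝ) ^ (α - 2) with hU
  set V := (t ^ 2 + 4 : ℝ) ^ (α - 2) with hV
  have hUpos : 0 < U := Real.rpow_pos_of_pos (hu1 t) _
  have hVpos : 0 < V := Real.rpow_pos_of_pos (hu4 t) _
  have hVU : V ≤ U :=
    Real.rpow_le_rpow_of_nonpos (hu1 t) (by nlinarith) (by linarith)
  have hB1 : 0 < (2 * α + 1) * t ^ 3 + (2 - 4 * α) * t ^ 2 + 3 * t - 2 := by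
    nlinarith [mul_nonneg (mul_nonneg hα0.le (sq_nonneg t)) (show (0:ℝ) ≤ t - 2 by linarith),
      mul_nonneg (sq_nonneg t) (show (0:ℝ) ≤ t - 2 by linarith)]
  unfold Ha
  rw [← hU, ← hV]
  rcases le_or_gt 0 ((2 * α - 1) * t ^ 2 + 4) with hB2 | hB2
  · have : 0 < U * ((2 * α + 1) * t ^ 3 + (2 - 4 * α) * t ^ 2 + 3 * t - 2) :=
      mul_pos hUpos hB1
    nlinarith [mul_nonneg hVpos.le hB2]
  · have key : U * ((2 * α - 1) * t ^ 2 + 4) ≤ V * ((2 * α - 1) * t ^ 2 + 4) := by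
      apply mul_le_mul_of_nonpos_right hVU hB2.le
    have hB12 : 0 < (2 * α + 1) * t ^ 3 + 3 * t + 6 := by
      nlinarith [mul_nonneg hα0.le (show (0:ℝ) ≤ t ^ 3 by positivity),
        (show (0:ℝ) < t ^ 3 by positivity)]
    nlinarith [mul_pos hUpos hB12]

lemma Ga_strictMono {α : ℝ} (hα0 : 0 < α) (hα1 : α < 1) :
    StrictMonoOn (Ga α) (Set.Ici 2) := by
  apply strictMonoOn_of_deriv_pos (convex_Ici 2)
  · exact fun t _ => (hGderiv α t).continuousAt.continuousWithinAt
  · intro t ht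
    rw [interior_Ici] at ht
    rw [(hGderiv α t).deriv]
    exact Ha_pos hα0 hα1 (le_of_lt ht)

theorem stmt_14 (α : ℝ) (hα0 : 0 < α) (hα1 : α < 1) :
    StrictMonoOn (fun x : ℝ =>
      (x - 2) * (x ^ 2 + 1) ^ α + 2 * (x ^ 2 + 4) ^ α
        - 2 * ((x - 1) ^ 2 + 4) ^ α - (x - 3) * ((x - 1) ^ 2 + 1) ^ α) (Set.Ici 3) := by
  have hfun : (fun x : ℝ =>
      (x - 2) * (x ^ 2 + 1) ^ α + 2 * (x ^ 2 + 4) ^ α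
        - 2 * ((x - 1) ^ 2 + 4) ^ α - (x - 3) * ((x - 1) ^ 2 + 1) ^ α)
      = fun x : ℝ => Fa α x - Fa α (x - 1) := by
    funext x
    unfold Fa
    ring
  rw [hfun]
  have hder : ∀ x : ℝ, HasDerivAt (fun x : ℝ => Fa α x - Fa α (x - 1))
      (Ga α x - Ga α (x - 1)) x := by
    intro x
    have h2 : HasDerivAt (fun x : ℝ => Fa α (x - 1)) (Ga α (x - 1) * 1) x :=
      by have := (hFderiv α (x - 1)).comp x ((hasDerivAt_id' x).sub_const 1); exact this
    exact ((hFderiv α x).sub h2).congr_deriv (by ring)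
  apply strictMonoOn_of_deriv_pos (convex_Ici 3)
  · exact fun x _ => (hder x).continuousAt.continuousWithinAt
  · intro x hx
    rw [interior_Ici] at hx
    rw [(hder x).deriv]
    have hx' : (3:ℝ) < x := hx
    have h1 : (x - 1 : ℝ) ∈ Set.Ici (2:ℝ) := Set.mem_Ici.mpr (by linarith)
    have h2 : (x : ℝ) ∈ Set.Ici (2:ℝ) := Set.mem_Ici.mpr (by linarith)
    have := Ga_strictMono hα0 hα1 h1 h2 (by linarith)
    linarith
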